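/- Consider an additive noise model Z_ℓ = f_ℓ(Z_{Pa(ℓ)}) + N_ℓ where N_ℓ has a twice-differentiable, strictly positive density p_N on ℝ with score r(u) = (log p_N)'(u), and f_ℓ is differentiable with ∂f_ℓ/∂z_k not identically zero for some k ∈ Pa(ℓ). Then the conditional density p_ℓ(z_ℓ | z_{Pa(ℓ)}) = p_N(z_ℓ − f_ℓ(z_{Pa(ℓ)})) satisfies: the mixed partial ∂² log p_ℓ(z_ℓ|z_{Pa(ℓ)}) / (∂z_ℓ ∂z_k) cannot be identically zero in (z_ℓ, z_{Pa(ℓ)}). -/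

import Mathlib

open MeasureTheory

private lemma update_differentiable {k : ℕ} (w : Fin k → ℝ) (k₀ : Fin k) :
    Differentiable ℝ (fun t : ℝ => Function.update w k₀ t) := by
  rw [differentiable_pi]
  intro j
  by_cases h : j = k₀
  · subst h; simp only [Function.update_self]; exact differentiable_id
  · simp only [Function.update, dif_neg h]
    exact differentiable_const _

/-- Additive noise model `Z_ℓ = f_ℓ(Z_{Pa(ℓ)}) + N_ℓ` with twice-differentiable strictly
positive noise density `p_N` integrating to 1, and `f_ℓ` whose partial derivative in
coordinate `k₀` is not identically zero. Then the mixed partial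
`∂² log p_ℓ(z_ℓ | z_{Pa(ℓ)}) / (∂z_ℓ ∂z_{k₀})` of the conditional log-density
`log p_N(z_ℓ − f_ℓ(z_{Pa(ℓ)}))` cannot vanish identically. -/
theorem mixed_partial_not_identically_zero {k : ℕ}
    (fℓ : (Fin k → ℝ) → ℝ) (k₀ : Fin k) (hf : Differentiable ℝ fℓ)
    (pN : ℝ → ℝ) (hpN : ∀ u, 0 < pN u) (hpNs : ContDiff ℝ 2 pN)
    (hpNi : ∫ u, pN u = 1)
    (hfk : ¬ ∀ w : Fin k → ℝ,
      deriv (fun t => fℓ (Function.update w k₀ t)) (w k₀) = 0) :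
    ¬ ∀ (zℓ : ℝ) (w : Fin k → ℝ),
      deriv (fun u =>
        deriv (fun t => Real.log (pN (u - fℓ (Function.update w k₀ t)))) (w k₀))
        zℓ = 0 := by
  intro H
  -- basic differentiability facts
  have hpN1 : Differentiable ℝ pN := hpNs.differentiable (by norm_num)
  have hpN'1 : ContDiff ℝ 1 (deriv pN) := by
    have := (contDiff_succ_iff_deriv (n := 1)).mp (by exact_mod_cast hpNs)
    exact this.2.2
  have hpN'd : Differentiable ℝ (deriv pN) := hpN'1.differentiable (by norm_num)
  set r : ℝ → ℝ := fun u => deriv pN u / pN u with hr_def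
  have hrd : Differentiable ℝ r := hpN'd.div hpN1 (fun u => (hpN u).ne')
  have hL : ∀ u : ℝ, HasDerivAt (fun v => Real.log (pN v)) (r u) u := fun u =>
    (hpN1 u).hasDerivAt.log (hpN u).ne'
  -- the derivative of t ↦ fℓ (update w k₀ t)
  have hgd : ∀ w : Fin k → ℝ, Differentiable ℝ (fun t : ℝ => fℓ (Function.update w k₀ t)) :=
    fun w => hf.comp (update_differentiable w k₀)
  set g' : (Fin k → ℝ) → ℝ :=
    fun w => deriv (fun t => fℓ (Function.update w k₀ t)) (w k₀) with hg'_def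
  -- compute the inner derivative
  have hinner : ∀ (u : ℝ) (w : Fin k → ℝ),
      deriv (fun t => Real.log (pN (u - fℓ (Function.update w k₀ t)))) (w k₀)
        = r (u - fℓ w) * (-(g' w)) := by
    intro u w
    have h1 : HasDerivAt (fun t : ℝ => fℓ (Function.update w k₀ t)) (g' w) (w k₀) :=
      (hgd w (w k₀)).hasDerivAt
    have h2 : HasDerivAt (fun t : ℝ => u - fℓ (Function.update w k₀ t)) (-(g' w)) (w k₀) :=
      (h1.const_sub u)
    have h3 := (hL (u - fℓ (Function.update w k₀ (w k₀)))).comp (w k₀) h2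
    rw [Function.update_eq_self] at h3
    exact h3.deriv
  -- compute the outer derivative
  have houter : ∀ (zℓ : ℝ) (w : Fin k → ℝ),
      deriv (fun u =>
        deriv (fun t => Real.log (pN (u - fℓ (Function.update w k₀ t)))) (w k₀)) zℓ
        = deriv r (zℓ - fℓ w) * (-(g' w)) := by
    intro zℓ w
    have h1 : HasDerivAt (fun u : ℝ => r (u - fℓ w)) (deriv r (zℓ - fℓ w)) zℓ := by
      have := ((hrd (zℓ - fℓ w)).hasDerivAt).comp zℓ ((hasDerivAt_id zℓ).sub_const (fℓ w))
      simpa [Function.comp_def] using this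
    have h2 : HasDerivAt (fun u : ℝ => r (u - fℓ w) * (-(g' w)))
        (deriv r (zℓ - fℓ w) * (-(g' w))) zℓ := h1.mul_const _
    have heq : (fun u =>
        deriv (fun t => Real.log (pN (u - fℓ (Function.update w k₀ t)))) (w k₀))
        = fun u => r (u - fℓ w) * (-(g' w)) := funext fun u => hinner u w
    rw [heq]
    exact h2.deriv
  -- obtain a point where g' ≠ 0
  push_neg at hfk
  obtain ⟨w₀, hw₀⟩ := hfk
  -- hence deriv r vanishes identically
  have hr'0 : ∀ v : ℝ, deriv r v = 0 := by
    intro v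
    have := H (v + fℓ w₀) w₀
    rw [houter (v + fℓ w₀) w₀] at this
    have h4 : deriv r (v + fℓ w₀ - fℓ w₀) = 0 := by
      rcases mul_eq_zero.mp this with h | h
      · exact h
      · exact absurd (neg_eq_zero.mp h) hw₀
    simpa using h4
  -- so r is constant
  have hrconst : ∀ u : ℝ, r u = r 0 := fun u => is_const_of_deriv_eq_zero hrd hr'0 u 0
  set c : ℝ := r 0 with hc_def
  -- log pN has constant derivative c, hence pN u = pN 0 * exp (c * u)
  have hLlin : ∀ u : ℝ, Real.log (pN u) = Real.log (pN 0) + c * u := by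
    intro u
    set F : ℝ → ℝ := fun v => Real.log (pN v) - c * v with hF_def
    have hFd : Differentiable ℝ F := by
      intro v
      exact ((hL v).sub ((hasDerivAt_id v).const_mul c)).differentiableAt
    have hF' : ∀ v, deriv F v = 0 := by
      intro v
      have : HasDerivAt F (r v - c * 1) v := (hL v).sub ((hasDerivAt_id v).const_mul c)
      rw [this.deriv, hrconst v]
      ring
    have := is_const_of_deriv_eq_zero hFd hF' u 0
    simp only [hF_def] at this
    linarith [this]
  have hpNexp : ∀ u : ℝ, pN u = pN 0 * Real.exp (c * u) := by
    intro u
    have h1 : pN u = Real.exp (Real.log (pN u)) := (Real.exp_log (hpN u)).symm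
    rw [h1, hLlin u, Real.exp_add, Real.exp_log (hpN 0)]
  -- pN is not integrable
  have hnint : ¬ Integrable pN := by
    intro hint
    rcases le_or_gt c 0 with hc | hc
    · -- pN ≥ pN 0 on Iic 0
      have hmono : IntegrableOn (fun _ : ℝ => pN 0) (Set.Iic (0:ℝ)) := by
        refine Integrable.mono (hint.restrict (s := Set.Iic (0:ℝ)))
          aestronglyMeasurable_const ?_
        refine (ae_restrict_iff' measurableSet_Iic).mpr (.of_forall fun u hu => ?_)
        rw [Real.norm_eq_abs, Real.norm_eq_abs, abs_of_pos (hpN 0), abs_of_pos (hpN u),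
          hpNexp u]
        have : (1:ℝ) ≤ Real.exp (c * u) := by
          rw [Real.one_le_exp_iff]
          have hu' : u ≤ 0 := hu
          nlinarith
        nlinarith [hpN 0]
      rw [integrableOn_const_iff] at hmono
      rcases hmono with h | h
      · exact (hpN 0).ne' (enorm_eq_zero.mp h)
      · simp [Real.volume_Iic] at h
    · have hmono : IntegrableOn (fun _ : ℝ => pN 0) (Set.Ici (0:ℝ)) := by
        refine Integrable.mono (hint.restrict (s := Set.Ici (0:ℝ)))
          aestronglyMeasurable_const ?_
        refine (ae_restrict_iff' measurableSet_Ici).mpr (.of_forall fun u hu => ?_)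
        rw [Real.norm_eq_abs, Real.norm_eq_abs, abs_of_pos (hpN 0), abs_of_pos (hpN u),
          hpNexp u]
        have : (1:ℝ) ≤ Real.exp (c * u) := by
          rw [Real.one_le_exp_iff]
          exact mul_nonneg hc.le hu
        nlinarith [hpN 0]
      rw [integrableOn_const_iff] at hmono
      rcases hmono with h | h
      · exact (hpN 0).ne' (enorm_eq_zero.mp h)
      · simp [Real.volume_Ici] at h
  rw [integral_undef hnint] at hpNi
  exact one_ne_zero hpNi.symm
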